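/- Let γ > 1, p(ρ) = ρ^γ, ε(ρ) = ρ^{γ-1}/(γ-1). Then for any distinct positive reals ρ₋, ρ₊, one has p(ρ₋) + p(ρ₊) - 2ρ₋ρ₊ (ε(ρ₊)-ε(ρ₋))/(ρ₊-ρ₋) > 0. -/

import Mathlib

open Real Set

private lemma stmt3_key (γ : ℝ) (hγ : 1 < γ) (a b : ℝ) (ha : 0 < a) (hab : a < b) :
    0 < (γ-1)*(b-a)*(a^γ + b^γ) - 2*a*b*(b^(γ-1) - a^(γ-1)) := by
  set G : ℝ → ℝ := fun x => (γ-1)*(x-a)*(a^γ + x^γ) - 2*a*x*(x^(γ-1) - a^(γ-1)) with hGdef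
  set G1 : ℝ → ℝ := fun x =>
    (γ-1)*((a^γ + x^γ) + (x-a)*(γ*x^(γ-1)))
      - (2*a*(x^(γ-1) - a^(γ-1)) + 2*a*x*((γ-1)*x^(γ-2))) with hG1def
  set G2 : ℝ → ℝ := fun x =>
    (γ-1)*(γ*x^(γ-1) + (γ*x^(γ-1) + (x-a)*(γ*((γ-1)*x^(γ-2)))))
      - (2*a*((γ-1)*x^(γ-2)) + (2*a*((γ-1)*x^(γ-2)) + 2*a*x*((γ-1)*((γ-2)*x^(γ-3))))) with hG2def
  have hG : ∀ x : ℝ, 0 < x → HasDerivAt G (G1 x) x := by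
    intro x hx
    have hp : ∀ p : ℝ, HasDerivAt (fun y : ℝ => y ^ p) (p * x ^ (p-1)) x :=
      fun p => Real.hasDerivAt_rpow_const (Or.inl hx.ne')
    have h1 := (((hasDerivAt_id x).sub_const a).const_mul (γ-1)).mul
      ((hasDerivAt_const x (a^γ)).add (hp γ))
    have h2 := (((hasDerivAt_id x).const_mul (2*a)).mul ((hp (γ-1)).sub_const (a^(γ-1))))
    have h3 := h1.sub h2
    convert h3 using 1
    · rfl
    · rfl
    · rfl
    simp only [id_eq, Pi.add_apply]
    rw [show γ-1-1 = γ-2 from by ring]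
    ring
  have hG1 : ∀ x : ℝ, 0 < x → HasDerivAt G1 (G2 x) x := by
    intro x hx
    have hp : ∀ p : ℝ, HasDerivAt (fun y : ℝ => y ^ p) (p * x ^ (p-1)) x :=
      fun p => Real.hasDerivAt_rpow_const (Or.inl hx.ne')
    have h1 := (((hasDerivAt_const x (a^γ)).add (hp γ)).add
      (((hasDerivAt_id x).sub_const a).mul ((hp (γ-1)).const_mul γ))).const_mul (γ-1)
    have h2 := (((hp (γ-1)).sub_const (a^(γ-1))).const_mul (2*a)).add
      ((((hasDerivAt_id x).const_mul (2*a)).mul ((hp (γ-2)).const_mul (γ-1))))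
    have h3 := h1.sub h2
    convert h3 using 1
    · rfl
    · rfl
    · rfl
    simp only [id_eq, Pi.add_apply]
    rw [show γ-1-1 = γ-2 from by ring, show γ-2-1 = γ-3 from by ring]
    ring
  have hγ0 : (0:ℝ) < γ := by linarith
  have hγ1 : (0:ℝ) < γ - 1 := by linarith
  have hG2pos : ∀ x : ℝ, a < x → 0 < G2 x := by
    intro x hax
    have hx : 0 < x := ha.trans hax
    have e1 : x ^ (γ-1) = x ^ (γ-2) * x := by
      rw [← Real.rpow_add_one hx.ne']; congr 1; ring
    have e2 : x ^ (γ-2) = x ^ (γ-3) * x := by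
      rw [← Real.rpow_add_one hx.ne']; congr 1; ring
    have hq : G2 x = γ*(γ-1)*(γ+1) * (x^(γ-3) * x) * (x - a) := by
      simp only [hG2def]
      rw [e1, e2]
      ring
    rw [hq]
    have h3 : 0 < x ^ (γ-3) := Real.rpow_pos_of_pos hx _
    exact mul_pos (mul_pos (mul_pos (mul_pos hγ0 hγ1) (by linarith)) (mul_pos h3 hx))
      (by linarith)
  have hmono1 : StrictMonoOn G1 (Set.Ici a) := by
    apply strictMonoOn_of_deriv_pos (convex_Ici a)
    · exact fun x hx => (hG1 x (ha.trans_le hx)).continuousAt.continuousWithinAt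
    · intro x hx
      rw [interior_Ici] at hx
      rw [(hG1 x (ha.trans hx)).deriv]
      exact hG2pos x hx
  have hG1a : G1 a = 0 := by
    have e1 : a ^ (γ-1) = a ^ (γ-2) * a := by
      rw [← Real.rpow_add_one ha.ne']; congr 1; ring
    have e2 : a ^ γ = a ^ (γ-1) * a := by
      rw [← Real.rpow_add_one ha.ne']; congr 1; ring
    simp only [hG1def]
    rw [e2, e1]
    ring
  have hG1pos : ∀ x : ℝ, a < x → 0 < G1 x := by
    intro x hax
    have := hmono1 (Set.self_mem_Ici) (Set.mem_Ici.mpr hax.le) hax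
    rw [hG1a] at this
    exact this
  have hmono : StrictMonoOn G (Set.Ici a) := by
    apply strictMonoOn_of_deriv_pos (convex_Ici a)
    · exact fun x hx => (hG x (ha.trans_le hx)).continuousAt.continuousWithinAt
    · intro x hx
      rw [interior_Ici] at hx
      rw [(hG x (ha.trans hx)).deriv]
      exact hG1pos x hx
  have hGa : G a = 0 := by simp only [hGdef]; ring
  have := hmono (Set.self_mem_Ici) (Set.mem_Ici.mpr hab.le) hab
  rw [hGa] at this
  exact this

private lemma stmt3_aux (γ : ℝ) (hγ : 1 < γ) (a b : ℝ) (ha : 0 < a) (hab : a < b) :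
    0 < a ^ γ + b ^ γ - 2*a*b * ((b^(γ-1)/(γ-1) - a^(γ-1)/(γ-1))/(b-a)) := by
  have key := stmt3_key γ hγ a b ha hab
  have h1 : (0:ℝ) < γ - 1 := by linarith
  have h2 : (0:ℝ) < b - a := by linarith
  have hrw : a ^ γ + b ^ γ - 2*a*b * ((b^(γ-1)/(γ-1) - a^(γ-1)/(γ-1))/(b-a))
      = ((γ-1)*(b-a)*(a^γ + b^γ) - 2*a*b*(b^(γ-1) - a^(γ-1))) / ((γ-1)*(b-a)) := by
    field_simp
  rw [hrw]
  exact div_pos key (by positivity)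

theorem stmt_3 (γ : ℝ) (hγ : 1 < γ) (ρm ρp : ℝ) (hρm : 0 < ρm) (hρp : 0 < ρp)
    (hne : ρm ≠ ρp) :
    ρm ^ γ + ρp ^ γ -
      2 * ρm * ρp * ((ρp ^ (γ - 1) / (γ - 1) - ρm ^ (γ - 1) / (γ - 1)) / (ρp - ρm)) > 0 := by
  rcases hne.lt_or_gt with h | h
  · have := stmt3_aux γ hγ ρm ρp hρm h
    linarith
  · have := stmt3_aux γ hγ ρp ρm hρp h
    have e : (ρp ^ (γ - 1) / (γ - 1) - ρm ^ (γ - 1) / (γ - 1)) / (ρp - ρm)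
        = (ρm ^ (γ - 1) / (γ - 1) - ρp ^ (γ - 1) / (γ - 1)) / (ρm - ρp) := by
      rw [← neg_sub (ρm ^ (γ - 1) / (γ - 1)), ← neg_sub ρm ρp, neg_div_neg_eq]
    rw [e]
    linarith
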